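/- Let G = H(k, n_0, ..., n_{k-1}) with Σ_{i=1}^{k-1} n_i ≥ 2, and let G' be the consolidation of G. Then the total number of cliques of G' is strictly greater than the total number of cliques of G. -/

import Mathlib

open SimpleGraph

def graphH (k : ℕ) (ns : ℕ → ℕ) :
    SimpleGraph (Fin k ⊕ Σ i : Fin k, Fin (ns i.val)) where
  Adj a b :=
    match a, b with
    | Sum.inl u, Sum.inl v => u ≠ v
    | Sum.inl u, Sum.inr p => u.val < p.1.val
    | Sum.inr p, Sum.inl u => u.val < p.1.val
    | Sum.inr _, Sum.inr _ => False
  symm := by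
    constructor
    rintro (u | p) (v | q) h
    · exact h.symm
    · exact h
    · exact h
    · exact h
  loopless := by
    constructor
    rintro (u | p) h
    · exact h rfl
    · exact h

/-- The clique size of the consolidation of `H(k, n_0, …, n_{k-1})` with largest relevant
index `l`: if `l = k - 1` the vertex receiving degree `k` is absorbed into the clique. -/
def consolK (k l : ℕ) : ℕ := if l = k - 1 then k + 1 else k

/-- The degree sequence of the consolidation: `n_s` and `n_l` are decreased by one and
`n_{s-1}` and `n_{l+1}` are increased by one (no vertex of degree `l + 1 = k` is recorded,
since such a vertex is absorbed into the clique). -/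
def consolNs (k : ℕ) (ns : ℕ → ℕ) (s l : ℕ) : ℕ → ℕ := fun i =>
  (if i = s - 1 then 1 else 0) + (if l + 1 < k ∧ i = l + 1 then 1 else 0) + ns i
    - (if i = s then 1 else 0) - (if i = l then 1 else 0)

/-- The data of a nontrivial consolidation move on `H(k, n_0, …, n_{k-1})`:  `k ≥ 1`, only
`n_0, …, n_{k-1}` are (possibly) nonzero, `Σ_{i=1}^{k-1} n_i ≥ 2`, `s` is the least index
`i ≥ 1` with `n_i > 0`, and `l` is the greatest index `i ≤ k - 1` with `n_i > 0`. -/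
def IsConsolData (k : ℕ) (ns : ℕ → ℕ) (s l : ℕ) : Prop :=
  1 ≤ k ∧ (∀ i, k ≤ i → ns i = 0) ∧ 2 ≤ ∑ i ∈ Finset.Ico 1 k, ns i ∧
    1 ≤ s ∧ ns s ≠ 0 ∧ (∀ i, 1 ≤ i → i < s → ns i = 0) ∧
    ns l ≠ 0 ∧ (∀ i, l < i → i < k → ns i = 0)

/-- The total number of cliques (of all sizes ≥ 1) of a graph. -/
noncomputable def numCliques {V : Type*} (G : SimpleGraph V) : ℕ :=
  Nat.card {s : Finset V // s.Nonempty ∧ G.IsClique (s : Set V)}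

section aux

variable (k : ℕ) (ns : ℕ → ℕ)

abbrev VH := Fin k ⊕ Σ i : Fin k, Fin (ns i.val)

abbrev TH := {t : Finset (Fin k) // t.Nonempty} ⊕
    Σ p : Σ i : Fin k, Fin (ns i.val), Finset (Fin p.1.val)

def embInl : Fin k ↪ VH k ns := ⟨Sum.inl, Sum.inl_injective⟩

def embLt (p : Σ i : Fin k, Fin (ns i.val)) : Fin p.1.val ↪ VH k ns :=
  ⟨fun x => Sum.inl (Fin.castLE p.1.isLt.le x),
   Sum.inl_injective.comp (Fin.castLE_injective _)⟩

def gH : TH k ns → Finset (VH k ns)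
  | Sum.inl t => t.1.map (embInl k ns)
  | Sum.inr ⟨p, u⟩ => insert (Sum.inr p) (u.map (embLt k ns p))

lemma gH_mem (x : TH k ns) :
    (gH k ns x).Nonempty ∧ (graphH k ns).IsClique ((gH k ns x : Finset (VH k ns)) : Set (VH k ns)) := by
  match x with
  | Sum.inl t =>
    refine ⟨Finset.Nonempty.map t.2, ?_⟩
    intro a ha b hb hab
    simp only [gH, Finset.coe_map, Set.mem_image, Finset.mem_coe, embInl] at ha hb
    obtain ⟨u, -, rfl⟩ := ha
    obtain ⟨v, -, rfl⟩ := hb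
    simpa [graphH] using fun h => hab (by rw [h])
  | Sum.inr ⟨p, u⟩ =>
    refine ⟨Finset.insert_nonempty _ _, ?_⟩
    intro a ha b hb hab
    simp only [gH, Finset.coe_insert, Set.mem_insert_iff, Finset.coe_map, Set.mem_image,
      Finset.mem_coe, embLt, Function.Embedding.coeFn_mk] at ha hb
    rcases ha with rfl | ⟨x, -, rfl⟩ <;> rcases hb with rfl | ⟨y, -, rfl⟩
    · exact absurd rfl hab
    · show Fin.castLE p.1.isLt.le y < p.1
      exact Fin.lt_def.mpr (by simpa using y.isLt)
    · show Fin.castLE p.1.isLt.le x < p.1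
      exact Fin.lt_def.mpr (by simpa using x.isLt)
    · simp only [graphH]
      exact fun h => hab (by rw [h])

lemma gH_inj : Function.Injective (gH k ns) := by
  rintro (t₁ | ⟨p, u⟩) (t₂ | ⟨q, w⟩) h
  · simp only [gH] at h
    exact congrArg Sum.inl (Subtype.ext (Finset.map_injective _ h))
  · exfalso
    have : (Sum.inr q : VH k ns) ∈ gH k ns (Sum.inl t₁) := by
      rw [h]; simp [gH]
    simp [gH, embInl] at this
  · exfalso
    have : (Sum.inr p : VH k ns) ∈ gH k ns (Sum.inl t₂) := by
      rw [← h]; simp [gH]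
    simp [gH, embInl] at this
  · have hpq : p = q := by
      have : (Sum.inr q : VH k ns) ∈ gH k ns (Sum.inr ⟨p, u⟩) := by
        rw [h]; simp [gH]
      simp only [gH, Finset.mem_insert, Finset.mem_map, embLt,
        Function.Embedding.coeFn_mk] at this
      rcases this with h' | ⟨x, -, h'⟩
      · exact (Sum.inr.inj h').symm
      · exact absurd h' (by simp)
    subst hpq
    have huw : u = w := by
      have hA : u.map (embLt k ns p) = w.map (embLt k ns p) := by
        have h1 : (Sum.inr p : VH k ns) ∉ u.map (embLt k ns p) := by simp [embLt]
        have h2 : (Sum.inr p : VH k ns) ∉ w.map (embLt k ns p) := by simp [embLt]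
        simp only [gH] at h
        rw [← Finset.erase_insert h1, ← Finset.erase_insert h2, h]
      exact Finset.map_injective _ hA
    rw [huw]


lemma gH_surj (sf : Finset (VH k ns)) (hne : sf.Nonempty)
    (hcl : (graphH k ns).IsClique (sf : Set (VH k ns))) :
    ∃ x, gH k ns x = sf := by
  rcases eq_or_ne sf.toRight ∅ with hR | hR
  · have hL : sf.toLeft.Nonempty := by
      obtain ⟨a, ha⟩ := hne
      match a with
      | Sum.inl u => exact ⟨u, Finset.mem_toLeft.2 ha⟩
      | Sum.inr p => exact absurd (Finset.mem_toRight.2 ha) (by simp [hR])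
    refine ⟨Sum.inl ⟨sf.toLeft, hL⟩, ?_⟩
    simp only [gH]
    ext a
    match a with
    | Sum.inl u => simp [embInl, Finset.mem_toLeft]
    | Sum.inr p =>
      simp only [Finset.mem_map, embInl, Function.Embedding.coeFn_mk]
      constructor
      · rintro ⟨x, -, h⟩; exact absurd h (by simp)
      · intro hmem
        exact absurd (Finset.mem_toRight.2 hmem) (by simp [hR])
  · obtain ⟨p, hp⟩ := Finset.nonempty_iff_ne_empty.2 hR
    have hp' : Sum.inr p ∈ sf := Finset.mem_toRight.1 hp
    have huniq : ∀ q, Sum.inr q ∈ sf → q = p := by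
      intro q hq
      by_contra hne'
      have := hcl hq hp' (by simpa using hne')
      simpa [graphH] using this
    have hlt : ∀ u, Sum.inl u ∈ sf → u.val < p.1.val := by
      intro u hu
      have := hcl hu hp' (by simp)
      simpa [graphH] using this
    refine ⟨Sum.inr ⟨p, (Finset.univ.filter
      (fun x : Fin p.1.val => Sum.inl (Fin.castLE p.1.isLt.le x) ∈ sf))⟩, ?_⟩
    simp only [gH]
    ext a
    match a with
    | Sum.inl u =>
      simp only [Finset.mem_insert, Finset.mem_map, Finset.mem_filter, Finset.mem_univ,
        true_and, embLt, Function.Embedding.coeFn_mk]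
      constructor
      · rintro (h' | ⟨x, hx, h'⟩)
        · exact absurd h' (by simp)
        · rw [← h']; exact hx
      · intro hu
        refine Or.inr ⟨⟨u.val, hlt u hu⟩, ?_, ?_⟩
        · convert hu using 3; exact Fin.ext rfl
        · rfl
    | Sum.inr q =>
      simp only [Finset.mem_insert, Finset.mem_map, embLt, Function.Embedding.coeFn_mk]
      constructor
      · rintro (h' | ⟨x, -, h'⟩)
        · rw [Sum.inr.inj h']; exact hp'
        · exact absurd h' (by simp)
      · intro hq
        exact Or.inl (by rw [huniq q hq])

noncomputable def cliqueEquiv :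
    TH k ns ≃ {s : Finset (VH k ns) // s.Nonempty ∧ (graphH k ns).IsClique (s : Set (VH k ns))} :=
  Equiv.ofBijective (fun x => ⟨gH k ns x, gH_mem k ns x⟩)
    ⟨fun a b hab => gH_inj k ns (Subtype.ext_iff.1 hab),
     fun ⟨sf, hne, hcl⟩ => by
       obtain ⟨x, hx⟩ := gH_surj k ns sf hne hcl
       exact ⟨x, Subtype.ext hx⟩⟩

lemma numCliques_graphH :
    numCliques (graphH k ns) = (2 ^ k - 1) + ∑ i ∈ Finset.range k, ns i * 2 ^ i := by
  rw [numCliques, ← Nat.card_congr (cliqueEquiv k ns)]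
  rw [Nat.card_eq_fintype_card]
  rw [Fintype.card_sum, Fintype.card_sigma]
  congr 1
  · rw [Fintype.card_subtype]
    have : Finset.univ.filter (fun t : Finset (Fin k) => t.Nonempty)
        = Finset.univ.erase ∅ := by
      ext t
      simp [Finset.nonempty_iff_ne_empty]
    rw [this, Finset.card_erase_of_mem (Finset.mem_univ _), Finset.card_univ,
      Fintype.card_finset, Fintype.card_fin]
  · calc ∑ p : (Σ i : Fin k, Fin (ns i.val)), Fintype.card (Finset (Fin p.1.val))
        = ∑ i : Fin k, ∑ _j : Fin (ns i.val), 2 ^ (i.val) := by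
          rw [← Finset.univ_sigma_univ, Finset.sum_sigma]
          simp [Fintype.card_finset]
      _ = ∑ i : Fin k, ns i.val * 2 ^ i.val := by
          simp [Finset.sum_const, mul_comm]
      _ = ∑ i ∈ Finset.range k, ns i * 2 ^ i := (Finset.sum_range fun i => ns i * 2 ^ i).symm

end aux

/-- The total number of cliques is strictly increased by (nontrivial) consolidation. -/
theorem consolidation_lt_numCliques (k : ℕ) (ns : ℕ → ℕ) (s l : ℕ)
    (h : IsConsolData k ns s l) :
    numCliques (graphH k ns) < numCliques (graphH (consolK k l) (consolNs k ns s l)) := by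
  obtain ⟨hk, hzero, hsum, hs1, hss, hmin, hll, hmax⟩ := h
  have hk2 : 2 ≤ k := by
    rcases Nat.lt_or_ge k 2 with h' | h'
    · rw [Finset.Ico_eq_empty (by omega)] at hsum
      simp at hsum
    · exact h'
  have hsk : s < k := by
    by_contra hc; push_neg at hc; exact hss (hzero s hc)
  have hlk : l < k := by
    by_contra hc; push_neg at hc; exact hll (hzero l hc)
  have hsl : s ≤ l := by
    by_contra hc; push_neg at hc; exact hss (hmax s hc hsk)
  have hns_s : 1 ≤ ns s := Nat.one_le_iff_ne_zero.2 hss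
  have hns_l : 1 ≤ ns l := Nat.one_le_iff_ne_zero.2 hll
  have hsl2 : s ≠ l ∨ 2 ≤ ns s := by
    rcases eq_or_ne s l with he | he
    · refine Or.inr ?_
      by_contra hc
      push_neg at hc
      have hone : ∑ i ∈ Finset.Ico 1 k, ns i = ns s := by
        apply Finset.sum_eq_single_of_mem s (Finset.mem_Ico.2 ⟨hs1, hsk⟩)
        intro i hi hne
        rcases Nat.lt_or_ge i s with h' | h'
        · exact hmin i (Finset.mem_Ico.1 hi).1 h'
        · exact hmax i (by omega) (Finset.mem_Ico.1 hi).2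
      omega
    · exact Or.inl he
  have hAext : ∑ i ∈ Finset.range (k + 1), ns i * 2 ^ i
      = ∑ i ∈ Finset.range k, ns i * 2 ^ i := by
    rw [Finset.sum_range_succ, hzero k le_rfl]; simp
  have hsmem : s ∈ Finset.range (k + 1) := Finset.mem_range.2 (by omega)
  have hlmem : l ∈ Finset.range (k + 1) := Finset.mem_range.2 (by omega)
  have hs1mem : s - 1 ∈ Finset.range (k + 1) := Finset.mem_range.2 (by omega)
  by_cases hcase : l = k - 1
  · subst hcase
    have hk' : consolK k (k - 1) = k + 1 := if_pos rfl
    rw [hk', numCliques_graphH, numCliques_graphH]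
    have key : ∑ i ∈ Finset.range (k + 1), consolNs k ns s (k - 1) i * 2 ^ i
          + 2 ^ s + 2 ^ (k - 1)
        = ∑ i ∈ Finset.range (k + 1), ns i * 2 ^ i + 2 ^ (s - 1) := by
      have hpt : ∀ i ∈ Finset.range (k + 1),
          consolNs k ns s (k - 1) i * 2 ^ i
            + ((if i = s then 2 ^ i else 0) + (if i = k - 1 then 2 ^ i else 0))
          = ns i * 2 ^ i + (if i = s - 1 then 2 ^ i else 0) := by
        intro i _
        have hco : consolNs k ns s (k - 1) i
            + ((if i = s then 1 else 0) + (if i = k - 1 then 1 else 0))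
            = ns i + (if i = s - 1 then 1 else 0) := by
          simp only [consolNs]
          rw [if_neg (by omega : ¬(k - 1 + 1 < k ∧ i = k - 1 + 1))]
          split_ifs <;> first | omega | (subst_vars; omega)
        have hmul := congrArg (· * 2 ^ i) hco
        simp only [add_mul, ite_mul, one_mul, zero_mul] at hmul
        exact hmul
      calc ∑ i ∈ Finset.range (k + 1), consolNs k ns s (k - 1) i * 2 ^ i
            + 2 ^ s + 2 ^ (k - 1)
          = ∑ i ∈ Finset.range (k + 1), (consolNs k ns s (k - 1) i * 2 ^ i
              + ((if i = s then 2 ^ i else 0) + (if i = k - 1 then 2 ^ i else 0))) := by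
            rw [Finset.sum_add_distrib, Finset.sum_add_distrib,
              Finset.sum_ite_eq' _ s (fun i => 2 ^ i),
              Finset.sum_ite_eq' _ (k - 1) (fun i => 2 ^ i),
              if_pos hsmem, if_pos hlmem]
            ring
        _ = ∑ i ∈ Finset.range (k + 1), (ns i * 2 ^ i
              + (if i = s - 1 then 2 ^ i else 0)) := Finset.sum_congr rfl hpt
        _ = _ := by
            rw [Finset.sum_add_distrib, Finset.sum_ite_eq' _ (s - 1) (fun i => 2 ^ i),
              if_pos hs1mem]
    have p1 : 2 ^ s = 2 * 2 ^ (s - 1) := by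
      conv_lhs => rw [show s = s - 1 + 1 by omega, pow_succ]
      ring
    have p2 : 2 ^ (s - 1) < 2 ^ (k - 1) := Nat.pow_lt_pow_right (by norm_num) (by omega)
    have p3 : 2 ^ (k + 1) = 2 * 2 ^ k := by rw [pow_succ]; ring
    have p4 : 2 ^ k = 2 * 2 ^ (k - 1) := by
      conv_lhs => rw [show k = k - 1 + 1 by omega, pow_succ]
      ring
    have p5 : (1 : ℕ) ≤ 2 ^ (s - 1) := Nat.one_le_two_pow
    have p6 : (1 : ℕ) ≤ 2 ^ k := Nat.one_le_two_pow
    have p7 : (1 : ℕ) ≤ 2 ^ (k + 1) := Nat.one_le_two_pow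
    omega
  · have hlt1 : l + 1 < k := by omega
    have hk' : consolK k l = k := if_neg hcase
    rw [hk', numCliques_graphH, numCliques_graphH]
    have hl1mem : l + 1 ∈ Finset.range (k + 1) := Finset.mem_range.2 (by omega)
    have hnsk0 : consolNs k ns s l k = 0 := by
      have h0 := hzero k le_rfl
      simp only [consolNs]
      split_ifs <;> omega
    have hBext : ∑ i ∈ Finset.range (k + 1), consolNs k ns s l i * 2 ^ i
        = ∑ i ∈ Finset.range k, consolNs k ns s l i * 2 ^ i := by
      rw [Finset.sum_range_succ, hnsk0]; simp
    have key : ∑ i ∈ Finset.range (k + 1), consolNs k ns s l i * 2 ^ i + 2 ^ s + 2 ^ l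
        = ∑ i ∈ Finset.range (k + 1), ns i * 2 ^ i + (2 ^ (s - 1) + 2 ^ (l + 1)) := by
      have hpt : ∀ i ∈ Finset.range (k + 1),
          consolNs k ns s l i * 2 ^ i
            + ((if i = s then 2 ^ i else 0) + (if i = l then 2 ^ i else 0))
          = ns i * 2 ^ i
            + ((if i = s - 1 then 2 ^ i else 0) + (if i = l + 1 then 2 ^ i else 0)) := by
        intro i _
        have hco : consolNs k ns s l i
            + ((if i = s then 1 else 0) + (if i = l then 1 else 0))
            = ns i + ((if i = s - 1 then 1 else 0) + (if i = l + 1 then 1 else 0)) := by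
          simp only [consolNs, eq_true hlt1, true_and]
          split_ifs <;> first | omega | (subst_vars; omega)
        have hmul := congrArg (· * 2 ^ i) hco
        simp only [add_mul, ite_mul, one_mul, zero_mul] at hmul
        exact hmul
      calc ∑ i ∈ Finset.range (k + 1), consolNs k ns s l i * 2 ^ i + 2 ^ s + 2 ^ l
          = ∑ i ∈ Finset.range (k + 1), (consolNs k ns s l i * 2 ^ i
              + ((if i = s then 2 ^ i else 0) + (if i = l then 2 ^ i else 0))) := by
            rw [Finset.sum_add_distrib, Finset.sum_add_distrib,
              Finset.sum_ite_eq' _ s (fun i => 2 ^ i),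
              Finset.sum_ite_eq' _ l (fun i => 2 ^ i),
              if_pos hsmem, if_pos hlmem]
            ring
        _ = ∑ i ∈ Finset.range (k + 1), (ns i * 2 ^ i
              + ((if i = s - 1 then 2 ^ i else 0) + (if i = l + 1 then 2 ^ i else 0))) :=
            Finset.sum_congr rfl hpt
        _ = _ := by
            rw [Finset.sum_add_distrib, Finset.sum_add_distrib,
              Finset.sum_ite_eq' _ (s - 1) (fun i => 2 ^ i),
              Finset.sum_ite_eq' _ (l + 1) (fun i => 2 ^ i),
              if_pos hs1mem, if_pos hl1mem]
    have q1 : 2 ^ s = 2 * 2 ^ (s - 1) := by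
      conv_lhs => rw [show s = s - 1 + 1 by omega, pow_succ]
      ring
    have q2 : 2 ^ (l + 1) = 2 * 2 ^ l := by rw [pow_succ]; ring
    have q3 : 2 ^ (s - 1) < 2 ^ l := Nat.pow_lt_pow_right (by norm_num) (by omega)
    have q4 : (1 : ℕ) ≤ 2 ^ k := Nat.one_le_two_pow
    omega
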